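/- Let r(z) be the hyperbolic distance from i to z = x+iy as above. For every integer a ≥ 1 there is a polynomial P_a(x,y) of total degree at most 4a-2 such that ∂^a r/∂y^a = P_a(x,y) / (y^a · ((x²+y²+1)² - 4y²)^{a - 1/2}). -/

import Mathlib

open Real

/-- The hyperbolic distance from `i` to `x + iy`. -/
noncomputable def hypDist (x y : ℝ) : ℝ :=
  Real.log ((Real.sqrt (x ^ 2 + (y + 1) ^ 2) + Real.sqrt (x ^ 2 + (y - 1) ^ 2)) /
    (Real.sqrt (x ^ 2 + (y + 1) ^ 2) - Real.sqrt (x ^ 2 + (y - 1) ^ 2)))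

namespace Stmt12Aux

open MvPolynomial

noncomputable def DP : MvPolynomial (Fin 2) ℝ := (X 0 ^ 2 + X 1 ^ 2 + 1) ^ 2 - 4 * X 1 ^ 2
noncomputable def DyP : MvPolynomial (Fin 2) ℝ := 4 * (X 0 ^ 2 + X 1 ^ 2 + 1) * X 1 - 8 * X 1
noncomputable def stepP (a : ℕ) (P : MvPolynomial (Fin 2) ℝ) : MvPolynomial (Fin 2) ℝ :=
  X 1 * DP * pderiv 1 P - C (a : ℝ) * DP * P - C ((a : ℝ) - 1/2) * X 1 * DyP * P

lemma totalDegree_pderiv_le {σ : Type*} [DecidableEq σ] (i : σ) (p : MvPolynomial σ ℝ) :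
    (pderiv i p).totalDegree ≤ p.totalDegree - 1 := by
  conv_lhs => rw [p.as_sum, map_sum]
  refine MvPolynomial.totalDegree_finsetSum_le ?_
  intro m hm
  rw [pderiv_monomial]
  rcases Nat.eq_zero_or_pos (m i) with h | h
  · simp [h]
  · refine (totalDegree_monomial_le _ _).trans ?_
    have h1 : (m - Finsupp.single i 1).sum (fun _ e => e) + 1 ≤ m.sum (fun _ e => e) := by
      have hme : m = (m - Finsupp.single i 1) + Finsupp.single i 1 := by
        ext j
        rcases eq_or_ne j i with rfl | hj
        · simp [Nat.sub_add_cancel h]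
        · simp [hj, Finsupp.single_apply, Ne.symm hj]
      conv_rhs => rw [hme]
      rw [Finsupp.sum_add_index (by simp) (by intros; rfl)]
      simp
    have h2 : m.sum (fun _ e => e) ≤ p.totalDegree := le_totalDegree hm
    have h3 : (m - Finsupp.single i 1).sum (fun _ => id) =
        (m - Finsupp.single i 1).sum (fun _ e => e) := rfl
    omega

lemma totalDegree_DP : DP.totalDegree ≤ 4 := by
  refine (totalDegree_sub _ _).trans (max_le ?_ ?_)
  · refine (totalDegree_pow _ _).trans ?_
    have : (X 0 ^ 2 + X 1 ^ 2 + 1 : MvPolynomial (Fin 2) ℝ).totalDegree ≤ 2 := by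
      refine (totalDegree_add _ _).trans (max_le ((totalDegree_add _ _).trans
        (max_le ?_ ?_)) ?_)
      · simp [(totalDegree_X_pow (R := ℝ) (0 : Fin 2) 2).le]
      · simp [(totalDegree_X_pow (R := ℝ) (1 : Fin 2) 2).le]
      · simp [totalDegree_one]
    omega
  · refine (totalDegree_mul _ _).trans ?_
    have h4 : (4 : MvPolynomial (Fin 2) ℝ) = C (4:ℝ) := (map_ofNat C _).symm
    rw [h4, totalDegree_C]
    simp [(totalDegree_X_pow (R := ℝ) (1 : Fin 2) 2).le]

lemma totalDegree_DyP : DyP.totalDegree ≤ 3 := by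
  refine (totalDegree_sub _ _).trans (max_le ?_ ?_)
  · refine (totalDegree_mul _ _).trans ?_
    have h1 : (4 * (X 0 ^ 2 + X 1 ^ 2 + 1) : MvPolynomial (Fin 2) ℝ).totalDegree ≤ 2 := by
      refine (totalDegree_mul _ _).trans ?_
      have h4 : (4 : MvPolynomial (Fin 2) ℝ) = C (4:ℝ) := (map_ofNat C _).symm
      rw [h4, totalDegree_C]
      have : (X 0 ^ 2 + X 1 ^ 2 + 1 : MvPolynomial (Fin 2) ℝ).totalDegree ≤ 2 := by
        refine (totalDegree_add _ _).trans (max_le ((totalDegree_add _ _).trans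
          (max_le ?_ ?_)) ?_)
        · simp [(totalDegree_X_pow (R := ℝ) (0 : Fin 2) 2).le]
        · simp [(totalDegree_X_pow (R := ℝ) (1 : Fin 2) 2).le]
        · simp [totalDegree_one]
      omega
    have h2 := totalDegree_X (R := ℝ) (1 : Fin 2)
    omega
  · refine (totalDegree_mul _ _).trans ?_
    have h4 : (8 : MvPolynomial (Fin 2) ℝ) = C (8:ℝ) := (map_ofNat C _).symm
    rw [h4, totalDegree_C, totalDegree_X]; omega

lemma totalDegree_stepP (a : ℕ) (ha : 1 ≤ a) (P : MvPolynomial (Fin 2) ℝ)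
    (hP : P.totalDegree ≤ 4 * a - 2) : (stepP a P).totalDegree ≤ 4 * (a + 1) - 2 := by
  have hpd := totalDegree_pderiv_le 1 P
  have hX := totalDegree_X (R := ℝ) (1 : Fin 2)
  have hDPd := totalDegree_DP
  have hDyPd := totalDegree_DyP
  refine (totalDegree_sub _ _).trans (max_le ((totalDegree_sub _ _).trans
    (max_le ?_ ?_)) ?_)
  · refine ((totalDegree_mul _ _).trans (add_le_add (totalDegree_mul _ _) le_rfl)).trans ?_
    omega
  · refine ((totalDegree_mul _ _).trans (add_le_add (totalDegree_mul _ _) le_rfl)).trans ?_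
    rw [totalDegree_C]
    omega
  · refine ((totalDegree_mul _ _).trans (add_le_add ((totalDegree_mul _ _).trans
      (add_le_add (totalDegree_mul _ _) le_rfl)) le_rfl)).trans ?_
    rw [totalDegree_C]
    omega

lemma hasDerivAt_eval_snd (P : MvPolynomial (Fin 2) ℝ) (x y : ℝ) :
    HasDerivAt (fun y' => MvPolynomial.eval ![x, y'] P)
      (MvPolynomial.eval ![x, y] (pderiv 1 P)) y := by
  induction P using MvPolynomial.induction_on with
  | C a => simpa using hasDerivAt_const y a
  | add p q hp hq => simpa using hp.fun_add hq
  | mul_X p i hp =>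
    have : (fun y' => MvPolynomial.eval ![x, y'] (p * X i))
        = fun y' => MvPolynomial.eval ![x, y'] p * (![x, y'] i) := by
      funext y'; simp
    rw [this]
    fin_cases i
    · simpa [pderiv_mul, mul_comm] using hp.mul_const x
    · have := hp.fun_mul (hasDerivAt_id y)
      simpa [pderiv_mul, mul_comm, mul_add, add_comm] using this

lemma Dpos (x y : ℝ) (hy : 0 < y) (hxy : ¬(x = 0 ∧ y = 1)) :
    0 < (x ^ 2 + y ^ 2 + 1) ^ 2 - 4 * y ^ 2 := by
  have haux : x ^ 2 + (y - 1) ^ 2 ≠ 0 := by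
    intro h
    exact hxy ⟨by nlinarith [sq_nonneg x, sq_nonneg (y-1)],
      by nlinarith [sq_nonneg x, sq_nonneg (y-1)]⟩
  have hauxpos : 0 < x ^ 2 + (y - 1) ^ 2 := lt_of_le_of_ne (by positivity) (Ne.symm haux)
  have hD : (x ^ 2 + y ^ 2 + 1) ^ 2 - 4 * y ^ 2
      = (x ^ 2 + (y + 1) ^ 2) * (x ^ 2 + (y - 1) ^ 2) := by ring
  rw [hD]
  have : (0:ℝ) < x ^ 2 + (y + 1) ^ 2 := by positivity
  exact mul_pos this hauxpos

lemma hypDist_hasDerivAt (x y : ℝ) (hy : 0 < y) (hxy : ¬(x = 0 ∧ y = 1)) :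
    HasDerivAt (fun y' => hypDist x y')
      ((y ^ 2 - x ^ 2 - 1) /
        (y * Real.sqrt ((x ^ 2 + y ^ 2 + 1) ^ 2 - 4 * y ^ 2))) y := by
  have hA2 : (Real.sqrt (x ^ 2 + (y + 1) ^ 2)) ^ 2 = x ^ 2 + (y + 1) ^ 2 :=
    Real.sq_sqrt (by positivity)
  have haux : x ^ 2 + (y - 1) ^ 2 ≠ 0 := by
    intro h
    exact hxy ⟨by nlinarith [sq_nonneg x, sq_nonneg (y-1)],
      by nlinarith [sq_nonneg x, sq_nonneg (y-1)]⟩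
  have hauxpos : 0 < x ^ 2 + (y - 1) ^ 2 := lt_of_le_of_ne (by positivity) (Ne.symm haux)
  have hB2 : (Real.sqrt (x ^ 2 + (y - 1) ^ 2)) ^ 2 = x ^ 2 + (y - 1) ^ 2 :=
    Real.sq_sqrt (by positivity)
  set A := Real.sqrt (x ^ 2 + (y + 1) ^ 2) with hA
  set B := Real.sqrt (x ^ 2 + (y - 1) ^ 2) with hB
  have hApos : 0 < A := Real.sqrt_pos.mpr (by positivity)
  have hBpos : 0 < B := Real.sqrt_pos.mpr hauxpos
  have hABpos : 0 < A + B := by linarith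
  have hsub : (A - B) * (A + B) = 4 * y := by nlinarith [hA2, hB2]
  have hABsub : 0 < A - B := by nlinarith
  have hD : (x ^ 2 + y ^ 2 + 1) ^ 2 - 4 * y ^ 2
      = (x ^ 2 + (y + 1) ^ 2) * (x ^ 2 + (y - 1) ^ 2) := by ring
  have hsD : Real.sqrt ((x ^ 2 + y ^ 2 + 1) ^ 2 - 4 * y ^ 2) = A * B := by
    rw [hD, Real.sqrt_mul (by positivity)]
  have hdA : HasDerivAt (fun y' => Real.sqrt (x ^ 2 + (y' + 1) ^ 2))
      ((2 * (y + 1)) * (1 / (2 * A))) y := by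
    have h1 : HasDerivAt (fun y' : ℝ => x ^ 2 + (y' + 1) ^ 2) (2 * (y + 1)) y := by
      have := ((hasDerivAt_id y).add_const 1).pow 2
      simpa [mul_comm] using this.const_add (x ^ 2)
    simpa [mul_comm, hA, Function.comp_def] using (Real.hasDerivAt_sqrt (by positivity)).comp y h1
  have hdB : HasDerivAt (fun y' => Real.sqrt (x ^ 2 + (y' - 1) ^ 2))
      ((2 * (y - 1)) * (1 / (2 * B))) y := by
    have h1 : HasDerivAt (fun y' : ℝ => x ^ 2 + (y' - 1) ^ 2) (2 * (y - 1)) y := by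
      have := ((hasDerivAt_id y).sub_const 1).pow 2
      simpa [mul_comm] using this.const_add (x ^ 2)
    simpa [mul_comm, hB, Function.comp_def] using (Real.hasDerivAt_sqrt haux).comp y h1
  have hq := (hdA.fun_add hdB).fun_div (hdA.fun_sub hdB) (by exact hABsub.ne')
  have hlog := hq.log (div_ne_zero hABpos.ne' hABsub.ne')
  have heq : (fun y' => hypDist x y') = fun y' =>
      Real.log ((Real.sqrt (x ^ 2 + (y' + 1) ^ 2) + Real.sqrt (x ^ 2 + (y' - 1) ^ 2)) /
        (Real.sqrt (x ^ 2 + (y' + 1) ^ 2) - Real.sqrt (x ^ 2 + (y' - 1) ^ 2))) := rfl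
  rw [heq, hsD]
  convert hlog using 1
  rw [eq_div_iff (by positivity), div_mul_eq_mul_div, div_eq_div_iff (by positivity)
    (by positivity)]
  field_simp
  simp only [← hA, ← hB]
  linear_combination ((-4*B + 4*B^3 + 4*A*B^2 + -4*A^2*B + 8*y*B^3 + -8*y*A*B^2 + 8*y*A^2*B +
    8*y^2*B + 4*y^2*B^3 + 4*y^2*A*B^2 + -4*y^2*A^2*B + -4*y^4*B + -8*x^2*B + 4*x^2*B^3 +
    4*x^2*A*B^2 + -4*x^2*A^2*B + -8*x^2*y^2*B + -4*x^4*B) + (-4*(x^2+(y+1)^2)*B^3 - 4*(x^2+(y-1)^2)^2*A +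
    4*(x^2+(y-1)^2)*B*(A^2+(x^2+(y+1)^2)) - (x^2+(y-1)^2))) * hA2 + ((4*B + -4*A*B^2 + 16*y*B +
    -8*y*A*B^2 + 24*y^2*B + -4*y^2*A*B^2 + 16*y^3*B + 4*y^4*B + 8*x^2*B + -4*x^2*A*B^2 +
    16*x^2*y*B + 8*x^2*y^2*B + 4*x^4*B) + (4*(x^2+(y+1)^2)*A*(B^2+(x^2+(y-1)^2)) - 4*(x^2+(y+1)^2)^2*B -
    4*(x^2+(y-1)^2)*A^3 + (x^2+(y+1)^2))) * hB2

lemma key (b : ℕ) (P : MvPolynomial (Fin 2) ℝ) (x y : ℝ) (hy : 0 < y)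
    (hD : 0 < (x ^ 2 + y ^ 2 + 1) ^ 2 - 4 * y ^ 2) :
    HasDerivAt (fun y' => MvPolynomial.eval ![x, y'] P /
        (y' ^ (b+1) * ((x ^ 2 + y' ^ 2 + 1) ^ 2 - 4 * y' ^ 2) ^ (((b:ℝ)+1) - 1/2)))
      (MvPolynomial.eval ![x, y] (stepP (b+1) P) /
        (y ^ (b+2) * ((x ^ 2 + y ^ 2 + 1) ^ 2 - 4 * y ^ 2) ^ (((b:ℝ)+2) - 1/2))) y := by
  set c : ℝ := ((b:ℝ)+1) - 1/2 with hc
  set Dv : ℝ := (x ^ 2 + y ^ 2 + 1) ^ 2 - 4 * y ^ 2 with hDv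
  have hN := hasDerivAt_eval_snd P x y
  have hpow : HasDerivAt (fun y' : ℝ => y' ^ (b+1)) ((b+1) * y ^ b) y := by
    simpa using hasDerivAt_pow (b+1) y
  have h1 : HasDerivAt (fun y' : ℝ => x ^ 2 + y' ^ 2 + 1) (2 * y) y := by
    have := (hasDerivAt_pow 2 y).const_add (x ^ 2)
    simpa using this.add_const 1
  have hDf : HasDerivAt (fun y' : ℝ => (x ^ 2 + y' ^ 2 + 1) ^ 2 - 4 * y' ^ 2)
      (2 * (x ^ 2 + y ^ 2 + 1) * (2 * y) - 4 * (2 * y)) y := by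
    have h2 := h1.fun_pow 2
    have h3 := (hasDerivAt_pow 2 y).const_mul (4:ℝ)
    simpa [mul_comm, mul_assoc, mul_left_comm] using h2.fun_sub h3
  have hrpow := hDf.rpow_const (p := c) (Or.inl hD.ne')
  have hden := hpow.fun_mul hrpow
  have hdenne : y ^ (b+1) * Dv ^ c ≠ 0 := by
    have := Real.rpow_pos_of_pos hD c
    positivity
  have hdiv := hN.fun_div hden hdenne
  refine hdiv.congr_deriv (Eq.symm ?_)
  have hE : 0 < Dv ^ c := Real.rpow_pos_of_pos hD c
  have e1 : Dv ^ (c - 1) = Dv ^ c / Dv := Real.rpow_sub_one hD.ne' c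
  have e2 : Dv ^ (((b:ℝ)+2) - 1/2) = Dv ^ c * Dv := by
    rw [show ((b:ℝ)+2) - 1/2 = c + 1 by ring, Real.rpow_add_one hD.ne']
  simp only [stepP, map_sub, map_mul, eval_X, eval_C, DP, DyP, map_add, map_pow,
    map_mul, map_ofNat, map_one, Matrix.cons_val_zero, Matrix.cons_val_one, Matrix.head_cons]
  rw [e1, e2]
  simp only [← hDv]
  field_simp
  push_cast
  ring

end Stmt12Aux

open Stmt12Aux MvPolynomial in
theorem stmt_12 (a : ℕ) (ha : 1 ≤ a) :
    ∃ P : MvPolynomial (Fin 2) ℝ, P.totalDegree ≤ 4 * a - 2 ∧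
      ∀ x y : ℝ, 0 < y → ¬(x = 0 ∧ y = 1) →
        iteratedDeriv a (fun y' => hypDist x y') y
          = MvPolynomial.eval ![x, y] P /
            (y ^ a * ((x ^ 2 + y ^ 2 + 1) ^ 2 - 4 * y ^ 2) ^ ((a : ℝ) - 1/2)) := by
  induction a, ha using Nat.le_induction with
  | base =>
    refine ⟨X 1 ^ 2 - X 0 ^ 2 - 1, ?_, ?_⟩
    · refine (totalDegree_sub _ _).trans (max_le ((totalDegree_sub _ _).trans
        (max_le ?_ ?_)) ?_)
      · simp [(totalDegree_X_pow (R := ℝ) (1 : Fin 2) 2).le]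
      · simp [(totalDegree_X_pow (R := ℝ) (0 : Fin 2) 2).le]
      · simp [totalDegree_one]
    · intro x y hy hxy
      rw [iteratedDeriv_one, (hypDist_hasDerivAt x y hy hxy).deriv]
      have hD := Dpos x y hy hxy
      have hs : Real.sqrt ((x ^ 2 + y ^ 2 + 1) ^ 2 - 4 * y ^ 2)
          = ((x ^ 2 + y ^ 2 + 1) ^ 2 - 4 * y ^ 2) ^ ((1:ℝ) - 1/2) := by
        rw [show (1:ℝ) - 1/2 = 1/2 by norm_num]
        exact Real.sqrt_eq_rpow _
      simp only [pow_one, Nat.cast_one]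
      rw [← hs]
      simp
  | succ n hn IH =>
    obtain ⟨P, hdeg, hev⟩ := IH
    refine ⟨stepP n P, totalDegree_stepP n hn P hdeg, ?_⟩
    intro x y hy hxy
    rw [iteratedDeriv_succ]
    have hO : IsOpen {y' : ℝ | 0 < y' ∧ ¬(x = 0 ∧ y' = 1)} := by
      have hset : {y' : ℝ | 0 < y' ∧ ¬(x = 0 ∧ y' = 1)}
          = if x = 0 then (Set.Ioi 0 \ {1}) else Set.Ioi 0 := by
        split_ifs with hx
        · ext z; simp [hx, Set.mem_Ioi, and_comm]
        · ext z; simp [hx, Set.mem_Ioi]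
      rw [hset]
      split_ifs
      · exact isOpen_Ioi.sdiff isClosed_singleton
      · exact isOpen_Ioi
    have heq : (iteratedDeriv n (fun y' => hypDist x y')) =ᶠ[nhds y]
        (fun y' => MvPolynomial.eval ![x, y'] P /
          (y' ^ n * ((x ^ 2 + y' ^ 2 + 1) ^ 2 - 4 * y' ^ 2) ^ ((n : ℝ) - 1/2))) := by
      filter_upwards [hO.mem_nhds ⟨hy, hxy⟩] with z hz
      exact hev x z hz.1 hz.2
    rw [heq.deriv_eq]
    obtain ⟨b, rfl⟩ : ∃ b, n = b + 1 := ⟨n - 1, by omega⟩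
    have hkey := (key b P x y hy (Dpos x y hy hxy)).deriv
    have ec : ((b:ℝ) + 1) = ((b + 1 : ℕ) : ℝ) := by push_cast; ring
    have ec2 : ((b:ℝ) + 2) = ((b + 1 + 1 : ℕ) : ℝ) := by push_cast; ring
    rw [ec, ec2] at hkey
    rw [hkey]
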